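/- Let H be a finitely generated group. Then every maximal subgroup of H is normal if and only if every finite generating set of H is an IG-set. -/

import Mathlib

/-- `S` is an invariable generating set (IG-set) of `G`. -/
def IsIGSet {G : Type*} [Group G] (S : Set G) : Prop :=
  ∀ f : G → G, Subgroup.closure ((fun s => (f s)⁻¹ * s * f s) '' S) = ⊤

lemma top_isCompact {H : Type*} [Group H] [Group.FG H] :
    IsCompactElement (⊤ : Subgroup H) := by
  classical
  rw [CompleteLattice.isCompactElement_iff_le_of_directed_sSup_le]
  intro s hne hdir hsup
  obtain ⟨T, hT⟩ := Group.FG.out (G := H)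
  have key : ∀ T' : Finset H, ∃ K ∈ s, ∀ x ∈ T', x ∈ K := by
    intro T'
    induction T' using Finset.induction_on with
    | empty => obtain ⟨K, hK⟩ := hne; exact ⟨K, hK, by simp⟩
    | @insert a t _ ih =>
      obtain ⟨K, hKs, hK⟩ := ih
      have ha : a ∈ sSup s := hsup (by trivial)
      rw [Subgroup.mem_sSup_of_directedOn hne hdir] at ha
      obtain ⟨K', hK's, haK'⟩ := ha
      obtain ⟨L, hLs, hKL, hK'L⟩ := hdir K hKs K' hK's
      refine ⟨L, hLs, fun x hx => ?_⟩
      rcases Finset.mem_insert.mp hx with rfl | hxt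
      · exact hK'L haK'
      · exact hKL (hK x hxt)
  obtain ⟨K, hKs, hK⟩ := key T
  refine ⟨K, hKs, ?_⟩
  rw [← hT, Subgroup.closure_le]
  exact fun x hx => hK x hx

lemma exists_coatom_le {H : Type*} [Group H] [Group.FG H] {K : Subgroup H} (hK : K ≠ ⊤) :
    ∃ M : Subgroup H, IsCoatom M ∧ K ≤ M := by
  have h := CompleteLattice.coatomic_of_top_compact (top_isCompact (H := H))
  rcases h.eq_top_or_exists_le_coatom K with h' | h'
  · exact absurd h' hK
  · exact h'

lemma exists_finset_subset_closure_eq_top {H : Type*} [Group H] [Group.FG H] {S : Set H}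
    (hS : Subgroup.closure S = ⊤) :
    ∃ T : Finset H, ↑T ⊆ S ∧ Subgroup.closure (T : Set H) = ⊤ := by
  classical
  have hc := (CompleteLattice.isCompactElement_iff_exists_le_sSup_of_le_sSup (Subgroup H) ⊤).mp (top_isCompact (H := H))
  have hsup : Subgroup.closure S = sSup ((fun x => Subgroup.closure {x}) '' S) := by
    apply le_antisymm
    · rw [Subgroup.closure_le]
      intro x hx
      have hmem : Subgroup.closure {x} ∈ (fun x => Subgroup.closure {x}) '' S :=
        ⟨x, hx, rfl⟩
      exact le_sSup hmem (Subgroup.subset_closure rfl)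
    · apply sSup_le
      rintro _ ⟨x, hx, rfl⟩
      exact Subgroup.closure_mono (Set.singleton_subset_iff.mpr hx)
  obtain ⟨t, hts, ht⟩ := hc ((fun x => Subgroup.closure {x}) '' S) (by rw [← hsup, hS])
  have hch : ∀ P ∈ t, ∃ x, x ∈ S ∧ Subgroup.closure {x} = P := by
    intro P hP
    rcases hts hP with ⟨x, hx, hxP⟩
    exact ⟨x, hx, hxP⟩
  choose f hfS hfP using hch
  refine ⟨t.attach.image (fun P => f P.1 P.2), ?_, ?_⟩
  · intro x hx
    simp only [Finset.coe_image, Set.mem_image] at hx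
    rcases hx with ⟨P, _, rfl⟩
    exact hfS P.1 P.2
  · apply top_unique
    refine le_trans ht (Finset.sup_le fun P hP => ?_)
    simp only [id]
    rw [← hfP P hP]
    apply Subgroup.closure_mono
    rw [Set.singleton_subset_iff]
    exact Finset.mem_coe.mpr (Finset.mem_image.mpr ⟨⟨P, hP⟩, Finset.mem_attach _ _, rfl⟩)

theorem every_maximal_normal_iff_every_finite_generating_set_is_IG
    {H : Type*} [Group H] [Group.FG H] :
    (∀ M : Subgroup H, IsCoatom M → M.Normal) ↔
      (∀ S : Finset H, Subgroup.closure (S : Set H) = ⊤ → IsIGSet (S : Set H)) := by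
  constructor
  · intro h S hS f
    by_contra hC
    obtain ⟨M, hM, hCM⟩ := exists_coatom_le hC
    have hN := h M hM
    have hSM : (S : Set H) ⊆ M := by
      intro s hs
      have h1 : (f s)⁻¹ * s * f s ∈ M :=
        hCM (Subgroup.subset_closure ⟨s, hs, rfl⟩)
      have h2 := hN.conj_mem _ h1 (f s)
      have h3 : f s * ((f s)⁻¹ * s * f s) * (f s)⁻¹ = s := by group
      rwa [h3] at h2
    have h4 : (⊤ : Subgroup H) ≤ M := by
      rw [← hS, Subgroup.closure_le]; exact hSM
    exact hM.1 (top_le_iff.mp h4)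
  · intro h M hM
    by_contra hnn
    have hc : ¬ ∀ n ∈ M, ∀ g : H, g * n * g⁻¹ ∈ M :=
      fun hc => hnn ⟨fun n hn g => hc n hn g⟩
    push_neg at hc
    obtain ⟨n, hnM, g, hg⟩ := hc
    classical
    set K : Subgroup H := M.map (MulAut.conj g).toMonoidHom with hKdef
    have hKM : ¬ K ≤ M := by
      intro hle
      exact hg (hle ⟨n, hnM, by simp [MulAut.conj_apply]⟩)
    have hlt : M < M ⊔ K := by
      refine lt_of_le_of_ne le_sup_left (fun he => hKM ?_)
      rw [he]; exact le_sup_right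
    have htop : M ⊔ K = ⊤ := hM.2 _ hlt
    obtain ⟨T, hTsub, hTtop⟩ := exists_finset_subset_closure_eq_top
      (S := (M : Set H) ∪ (K : Set H))
      (by rw [← Subgroup.sup_eq_closure]; exact htop)
    set f : H → H := fun x => if x ∈ M then 1 else g with hfdef
    have hIG := h T hTtop f
    have hsub : ((fun s => (f s)⁻¹ * s * f s) '' ↑T) ⊆ (M : Set H) := by
      rintro _ ⟨x, hx, rfl⟩
      by_cases hxM : x ∈ M
      · simp only [hfdef, if_pos hxM, inv_one, one_mul, mul_one]
        exact hxM
      · simp only [hfdef, if_neg hxM]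
        rcases hTsub hx with hxM' | hxK
        · exact absurd hxM' hxM
        · rcases Subgroup.mem_map.mp hxK with ⟨m, hm, rfl⟩
          have heq : g⁻¹ * ((MulAut.conj g).toMonoidHom m) * g = m := by
            simp only [MulEquiv.coe_toMonoidHom, MulAut.conj_apply]
            group
          have := heq ▸ hm
          exact this
    have h2 := (Subgroup.closure_le M).2 hsub
    rw [hIG] at h2
    exact hM.1 (top_le_iff.mp h2)
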